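/- Lower bound on target error under identical marginals: suppose the source and target distributions have the same marginal feature distribution p(x), the loss is L(h(x),y) = |h(x) − y|, and the source error of hypothesis h is zero, i.e., ε_S(h) = 0. Then the target error satisfies ε_T(h) ≥ |P_T[y=1] − P_S[y=1]|. -/

import Mathlib

open MeasureTheory

/-- If the source and target distributions on `X × Bool` have the same feature marginal and
the source error of `h` under the absolute loss is zero, then the target error is at least
the difference of the marginal label probabilities. -/
theorem target_error_lower_bound {X : Type*} [MeasurableSpace X]
    (PS PT : Measure (X × Bool)) [IsProbabilityMeasure PS] [IsProbabilityMeasure PT]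
    (hmarg : PS.map Prod.fst = PT.map Prod.fst)
    (h : X → Bool) (hmeas : Measurable h)
    (hS : ∫ p : X × Bool, |(if h p.1 then (1:ℝ) else 0) - (if p.2 then (1:ℝ) else 0)| ∂PS = 0) :
    ∫ p : X × Bool, |(if h p.1 then (1:ℝ) else 0) - (if p.2 then (1:ℝ) else 0)| ∂PT ≥
      |(PT (Set.univ ×ˢ {true})).toReal - (PS (Set.univ ×ˢ {true})).toReal| := by
  classical
  set D : Set (X × Bool) := {p | h p.1 ≠ p.2} with hDdef
  set A : Set (X × Bool) := {p | p.2 = true} with hAdef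
  set B : Set (X × Bool) := {p | h p.1 = true} with hBdef
  have hDm : MeasurableSet D := by
    have : MeasurableSet {p : X × Bool | h p.1 = p.2} :=
      measurableSet_eq_fun (hmeas.comp measurable_fst) measurable_snd
    simpa [hDdef, Set.compl_setOf] using this.compl
  have hint : ∀ (μ : Measure (X × Bool)),
      ∫ p : X × Bool, |(if h p.1 then (1:ℝ) else 0) - (if p.2 then (1:ℝ) else 0)| ∂μ
        = (μ D).toReal := by
    intro μ
    have heq : (fun p : X × Bool =>
        |(if h p.1 then (1:ℝ) else 0) - (if p.2 then (1:ℝ) else 0)|)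
        = D.indicator (fun _ => (1:ℝ)) := by
      funext p
      by_cases h1 : h p.1 <;> by_cases h2 : p.2 <;>
        simp [hDdef, Set.indicator, h1, h2]
    rw [heq]
    simp [integral_indicator_const (1:ℝ) hDm]
    rfl
  have hAset : (Set.univ ×ˢ ({true} : Set Bool)) = A := by
    ext ⟨x,b⟩; simp [hAdef]
  have hAB : A ⊆ B ∪ D := by
    intro p hp
    by_cases hb : h p.1 = true
    · exact Or.inl hb
    · have hp' : p.2 = true := hp
      refine Or.inr ?_
      simp only [hDdef, Set.mem_setOf_eq, hp']
      exact hb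
  have hBA : B ⊆ A ∪ D := by
    intro p hp
    by_cases ha : p.2 = true
    · exact Or.inl ha
    · refine Or.inr ?_
      simp only [hDdef, Set.mem_setOf_eq]
      exact fun hh => ha (hh.symm.trans hp)
  -- PS D = 0
  have hPSD : PS D = 0 := by
    have := (hint PS).symm.trans hS
    exact (ENNReal.toReal_eq_zero_iff _).1 this |>.resolve_right (measure_ne_top _ _)
  -- PS A = PS B
  have hPSAB : PS A = PS B := by
    apply le_antisymm
    · calc PS A ≤ PS (B ∪ D) := measure_mono hAB
        _ ≤ PS B + PS D := measure_union_le _ _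
        _ = PS B := by rw [hPSD, add_zero]
    · calc PS B ≤ PS (A ∪ D) := measure_mono hBA
        _ ≤ PS A + PS D := measure_union_le _ _
        _ = PS A := by rw [hPSD, add_zero]
  -- PT B = PS B
  have hBm : MeasurableSet {x : X | h x = true} := hmeas (measurableSet_singleton true)
  have hPTB : PT B = PS B := by
    have hmap : PS.map Prod.fst {x | h x = true} = PT.map Prod.fst {x | h x = true} := by
      rw [hmarg]
    rw [Measure.map_apply measurable_fst hBm, Measure.map_apply measurable_fst hBm] at hmap
    have : Prod.fst ⁻¹' {x : X | h x = true} = B := rfl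
    rw [this] at hmap
    exact hmap.symm
  -- main inequality in PT
  have h1 : (PT A).toReal ≤ (PT B).toReal + (PT D).toReal := by
    have : PT A ≤ PT B + PT D :=
      (measure_mono hAB).trans (measure_union_le _ _)
    have := ENNReal.toReal_mono (by finiteness) this
    rwa [ENNReal.toReal_add (measure_ne_top _ _) (measure_ne_top _ _)] at this
  have h2 : (PT B).toReal ≤ (PT A).toReal + (PT D).toReal := by
    have : PT B ≤ PT A + PT D :=
      (measure_mono hBA).trans (measure_union_le _ _)
    have := ENNReal.toReal_mono (by finiteness) this
    rwa [ENNReal.toReal_add (measure_ne_top _ _) (measure_ne_top _ _)] at this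
  rw [ge_iff_le, hint PT, hAset, hPSAB, ← hPTB]
  rw [abs_sub_le_iff]
  constructor <;> linarith
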